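/- Let (W, S) be a Coxeter group with S finite, and let W_J be a standard parabolic subgroup (generated by a subset J ⊆ S). Let σ be an automorphism of W permuting S and stabilizing J. Then the natural map W^σ/(W_J)^σ → (W/W_J)^σ from σ-fixed elements modulo σ-fixed parabolic elements to σ-fixed cosets is a bijection. In particular, every σ-stable coset wW_J contains a σ-fixed element, namely its unique minimal-length representative. -/

import Mathlib

namespace SigmaFixedAux

open List CoxeterSystem
open scoped Classical

variable {B : Type*} {W : Type*} [Group W] {M : CoxeterMatrix B} (cs : CoxeterSystem M W)

local prefix:100 "s" => cs.simple
local prefix:100 "π" => cs.wordProd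
local prefix:100 "ℓ" => cs.length

lemma simple_conj_eq_iff (i : B) (x : W) : (s i * x * s i = s i) ↔ x = s i := by
  constructor
  · intro h
    have := congrArg (fun u => s i * u * s i) h
    simpa [← mul_assoc] using this
  · rintro rfl; simp

noncomputable def eta (i : B) : Equiv.Perm (W × ZMod 2) :=
  Function.Involutive.toPerm
    (fun q => (cs.simple i * q.1 * cs.simple i, q.2 + if q.1 = cs.simple i then 1 else 0))
    (by
      rintro ⟨x, d⟩
      simp only [Prod.mk.injEq]
      refine ⟨by simp [← mul_assoc], ?_⟩
      by_cases h : x = s i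
      · rw [if_pos h, if_pos ((simple_conj_eq_iff cs i x).mpr h), add_assoc,
          show (1 + 1 : ZMod 2) = 0 by decide, add_zero]
      · rw [if_neg h, if_neg (fun hc => h ((simple_conj_eq_iff cs i x).mp hc)), add_zero, add_zero])

@[simp] lemma eta_apply (i : B) (q : W × ZMod 2) :
    eta cs i q = (cs.simple i * q.1 * cs.simple i,
      q.2 + if q.1 = cs.simple i then 1 else 0) := rfl

noncomputable def Phi (ω : List B) : Equiv.Perm (W × ZMod 2) := (ω.map (eta cs)).prod

@[simp] lemma Phi_nil : Phi cs ([] : List B) = 1 := rfl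

lemma Phi_cons (i : B) (ω : List B) : Phi cs (i :: ω) = eta cs i * Phi cs ω := by
  simp [Phi]

lemma rightInvSeq_cons (i : B) (ω : List B) :
    cs.rightInvSeq (i :: ω) = ((π ω)⁻¹ * s i * π ω) :: cs.rightInvSeq ω := rfl

lemma Phi_apply (ω : List B) (t : W) (ε : ZMod 2) :
    Phi cs ω (t, ε) = (π ω * t * (π ω)⁻¹,
      ε + ((cs.rightInvSeq ω).count t : ZMod 2)) := by
  induction ω generalizing ε with
  | nil => simp
  | cons i ω ih =>
      rw [Phi_cons, Equiv.Perm.mul_apply, ih, eta_apply]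
      have hcond : (π ω * t * (π ω)⁻¹ = s i) ↔ ((π ω)⁻¹ * s i * π ω = t) := by
        constructor
        · intro h; rw [← h]; group
        · intro h; rw [← h]; group
      rw [rightInvSeq_cons]
      simp only [cs.wordProd_cons, count_cons, beq_iff_eq]
      refine Prod.ext (by simp [mul_inv_rev, mul_assoc]) ?_
      by_cases h : (π ω)⁻¹ * s i * π ω = t
      · rw [if_pos (hcond.mpr h), if_pos h]
        push_cast
        ring
      · rw [if_neg (fun hc => h (hcond.mp hc)), if_neg h]
        push_cast
        ring


-- the generic entry of the right inversion sequence of an alternating word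
noncomputable def hseq (i j : B) (n : ℕ) : W :=
  (π (alternatingWord i j n))⁻¹ * s (if Even n then j else i) * π (alternatingWord i j n)

lemma rightInvSeq_alternatingWord (i j : B) (N : ℕ) :
    cs.rightInvSeq (alternatingWord i j N) = ((range N).reverse).map (hseq cs i j) := by
  induction N with
  | zero => simp [alternatingWord]
  | succ N ih =>
      rw [alternatingWord_succ' i j N]
      have : cs.rightInvSeq ((if Even N then j else i) :: alternatingWord i j N)
          = ((π (alternatingWord i j N))⁻¹ * s (if Even N then j else i)
              * π (alternatingWord i j N)) :: cs.rightInvSeq (alternatingWord i j N) := rfl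
      rw [this, ih, range_succ, reverse_append]
      simp [hseq]

lemma hseq_conj (i j : B) (n : ℕ) :
    hseq cs i j n
      = ((s i * s j) ^ (n / 2))⁻¹
          * ((if Even n then 1 else s j)⁻¹ * s (if Even n then j else i)
              * (if Even n then 1 else s j)) * (s i * s j) ^ (n / 2) := by
  rw [hseq, cs.prod_alternatingWord_eq_mul_pow]
  group

lemma conj_comm_pow (g z : W) (hg : g * z * g⁻¹ = z⁻¹) (k : ℕ) :
    g * z ^ k = (z ^ k)⁻¹ * g := by
  have h2 := conj_pow (a := g) (b := z) (i := k)
  rw [hg, inv_pow] at h2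
  calc g * z ^ k = (g * z ^ k * g⁻¹) * g := by group
    _ = (z ^ k)⁻¹ * g := by rw [← h2]

lemma y_conj (i j : B) : s j * (s i * s j) * (s j)⁻¹ = (s i * s j)⁻¹ := by
  simp [mul_assoc, mul_inv_rev]

lemma yxy_conj (i j : B) :
    (s j * s i * s j) * (s i * s j) * (s j * s i * s j)⁻¹ = (s i * s j)⁻¹ := by
  simp [mul_assoc, mul_inv_rev]

lemma yxy_eq (i j : B) : s j * s i * s j = (s i * s j)⁻¹ * s j := by
  simp [mul_assoc, mul_inv_rev]

lemma hseq_zpow (i j : B) (n : ℕ) :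
    hseq cs i j n = (s i * s j) ^ (-(n : ℤ)) * s j := by
  have hzpow : ∀ k : ℕ, ((s i * s j) ^ k)⁻¹ = (s i * s j) ^ (-(k : ℤ)) := by
    intro k
    rw [← zpow_natCast (s i * s j) k, ← zpow_neg]
  rcases Nat.even_or_odd n with he | ho
  · obtain ⟨E, rfl⟩ := he
    have hdiv : (E + E) / 2 = E := by omega
    rw [hseq_conj, if_pos (Even.add_self E), if_pos (Even.add_self E), hdiv,
      inv_one, one_mul, mul_one, mul_assoc,
      conj_comm_pow (s j) (s i * s j) (y_conj cs i j) E, ← mul_assoc,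
      hzpow, ← zpow_add, show (-(E:ℤ) + -(E:ℤ)) = -((E + E : ℕ) : ℤ) by omega]
  · obtain ⟨E, rfl⟩ := ho
    have hne : ¬ Even (2 * E + 1) := by simp [Nat.even_add_one, Nat.even_iff]
    have hdiv : (2 * E + 1) / 2 = E := by omega
    rw [hseq_conj, if_neg hne, if_neg hne, hdiv, cs.inv_simple, mul_assoc,
      conj_comm_pow (s j * s i * s j) (s i * s j) (yxy_conj cs i j) E,
      ← mul_assoc, yxy_eq cs i j, hzpow]
    rw [show (s i * s j) ^ (-(E:ℤ)) * (s i * s j) ^ (-(E:ℤ)) * ((s i * s j)⁻¹ * s j)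
        = ((s i * s j) ^ (-(E:ℤ)) * (s i * s j) ^ (-(E:ℤ)) * (s i * s j) ^ (-1 : ℤ)) * s j by
      rw [zpow_neg_one]; group]
    rw [← zpow_add, ← zpow_add,
      show (-(E:ℤ) + -(E:ℤ) + -1) = -((2 * E + 1 : ℕ) : ℤ) by omega]



lemma hseq_add (i j : B) (n : ℕ) : hseq cs i j (n + M i j) = hseq cs i j n := by
  rw [hseq_zpow, hseq_zpow]
  congr 1
  have h1 : ((s i * s j) : W) ^ ((M i j : ℕ) : ℤ) = 1 := by
    rw [zpow_natCast]; exact cs.simple_mul_simple_pow i j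
  rw [show (-((n + M i j : ℕ) : ℤ)) = -(n:ℤ) + -((M i j : ℕ) : ℤ) by omega, zpow_add,
    zpow_neg (s i * s j) ((M i j : ℕ) : ℤ), h1, inv_one, mul_one]

lemma Phi_alternating (i j : B) (a : ℕ) :
    Phi cs (alternatingWord i j (2 * a)) = (eta cs i * eta cs j) ^ a := by
  induction a with
  | zero => simp [Phi, alternatingWord]
  | succ a ih =>
      have h2 : 2 * (a + 1) = (2 * a) + 1 + 1 := by ring
      rw [h2, alternatingWord_succ' i j ((2*a)+1), alternatingWord_succ' i j (2*a)]
      have he : ¬ Even (2 * a + 1) := by simp [Nat.even_add_one]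
      have he2 : Even (2 * a) := even_two_mul a
      rw [if_neg he, if_pos he2, Phi_cons, Phi_cons, ih, pow_succ']
      rw [← mul_assoc]

lemma liftable : M.IsLiftable (fun i => eta cs i) := by
  intro i j
  show (eta cs i * eta cs j) ^ M i j = 1
  rw [← Phi_alternating]
  apply Equiv.ext
  rintro ⟨t, ε⟩
  rw [Phi_apply]
  have hprod : π (alternatingWord i j (2 * M i j)) = 1 := by
    rw [cs.prod_alternatingWord_eq_mul_pow, if_pos (even_two_mul _),
      Nat.mul_div_cancel_left _ (by norm_num : 0 < 2), one_mul,
      cs.simple_mul_simple_pow i j]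
  have hcount : ∃ c, (cs.rightInvSeq (alternatingWord i j (2 * M i j))).count t = c + c := by
    rw [rightInvSeq_alternatingWord, map_reverse, count_reverse]
    rw [show 2 * M i j = M i j + M i j by ring, List.range_add]
    refine ⟨((range (M i j)).map (hseq cs i j)).count t, ?_⟩
    rw [map_append, count_append]
    congr 1
    rw [map_map]
    refine congrArg _ (List.map_congr_left ?_)
    intro k _
    show hseq cs i j (M i j + k) = hseq cs i j k
    rw [add_comm, hseq_add]
  obtain ⟨c, hc⟩ := hcount
  rw [hprod, hc]
  have h0 : ((c + c : ℕ) : ZMod 2) = 0 := by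
    push_cast
    exact CharTwo.add_self_eq_zero _
  rw [h0, add_zero]
  simp

noncomputable def phi : W →* Equiv.Perm (W × ZMod 2) :=
  cs.lift ⟨fun i => eta cs i, liftable cs⟩

lemma phi_simple (i : B) : phi cs (s i) = eta cs i := by
  simp [phi, CoxeterSystem.lift_apply_simple]

lemma phi_wordProd (ω : List B) : phi cs (π ω) = Phi cs ω := by
  induction ω with
  | nil => simp [Phi]
  | cons i ω ih => rw [cs.wordProd_cons, map_mul, ih, phi_simple, Phi_cons]

noncomputable def Nn (w t : W) : ZMod 2 := (phi cs w (t, 0)).2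

lemma Nn_word (ω : List B) (t : W) :
    Nn cs (π ω) t = ((cs.rightInvSeq ω).count t : ZMod 2) := by
  rw [Nn, phi_wordProd, Phi_apply, zero_add]

lemma Nn_one_lt {w t : W} (h : Nn cs w t = 1) : ℓ (w * t) < ℓ w := by
  obtain ⟨ω, hred, hw⟩ := cs.exists_reduced_word' w
  subst hw
  rw [Nn_word] at h
  have hmem : t ∈ cs.rightInvSeq ω := by
    by_contra hmem
    rw [List.count_eq_zero.mpr hmem] at h
    simp at h
  exact (cs.isRightInversion_of_mem_rightInvSeq hred hmem).2

lemma rightInvSeq_append (α β : List B) :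
    cs.rightInvSeq (α ++ β)
      = (cs.rightInvSeq α).map (fun u => (π β)⁻¹ * u * π β) ++ cs.rightInvSeq β := by
  induction α with
  | nil => simp
  | cons i α ih =>
      rw [cons_append, rightInvSeq_cons, rightInvSeq_cons, ih]
      simp only [map_cons, cons_append, cs.wordProd_append]
      congr 1
      rw [mul_inv_rev]
      group

lemma Nn_cocycle (a b t : W) : Nn cs (a * b) t = Nn cs a (b * t * b⁻¹) + Nn cs b t := by
  obtain ⟨α, ha⟩ := cs.wordProd_surjective a
  obtain ⟨β, hb⟩ := cs.wordProd_surjective b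
  subst ha; subst hb
  rw [← cs.wordProd_append, Nn_word, Nn_word, Nn_word, rightInvSeq_append, count_append]
  have hinj : Function.Injective (fun u : W => (π β)⁻¹ * u * π β) := by
    intro u v huv
    simpa using mul_left_cancel (mul_right_cancel huv)
  have ht : t = (fun u : W => (π β)⁻¹ * u * π β) (π β * t * (π β)⁻¹) := by
    simp [mul_assoc]
  have hcnt : List.count t ((cs.rightInvSeq α).map (fun u : W => (π β)⁻¹ * u * π β))
      = List.count (π β * t * (π β)⁻¹) (cs.rightInvSeq α) := by
    conv_lhs => rw [ht]
    exact List.count_map_of_injective _ (fun u : W => (π β)⁻¹ * u * π β) hinj _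
  rw [Nat.cast_add, hcnt]

lemma Nn_simple (i : B) : Nn cs (s i) (s i) = 1 := by
  have : s i = π [i] := by simp
  rw [this, Nn_word]
  rw [cs.rightInvSeq_singleton]
  simp

lemma Nn_descent {w : W} {i : B} (h : ℓ (w * s i) < ℓ w) : Nn cs w (s i) = 1 := by
  have hw : w = (w * s i) * s i := by simp
  have hco := Nn_cocycle cs (w * s i) (s i) (s i)
  have hconj : s i * s i * (s i)⁻¹ = s i := by simp
  rw [hconj] at hco
  have h0 : Nn cs (w * s i) (s i) = 0 := by
    rcases (by decide : ∀ x : ZMod 2, x = 0 ∨ x = 1) (Nn cs (w * s i) (s i)) with h' | h'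
    · exact h'
    · exfalso
      have := Nn_one_lt cs h'
      rw [mul_assoc] at this
      simp at this
      omega
  rw [← hw, h0, Nn_simple, zero_add] at hco
  exact hco

/-- Strong exchange for simple reflections, arbitrary word. -/
lemma exchange {w : W} {i : B} (ω : List B) (hw : π ω = w)
    (h : ℓ (w * s i) < ℓ w) :
    ∃ k, k < ω.length ∧ π (ω.eraseIdx k) = w * s i := by
  have hN : Nn cs w (s i) = 1 := Nn_descent cs h
  rw [← hw, Nn_word] at hN
  have hmem : s i ∈ cs.rightInvSeq ω := by
    by_contra hmem
    rw [List.count_eq_zero.mpr hmem] at hN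
    simp at hN
  obtain ⟨k, hk, hget⟩ := List.getElem_of_mem hmem
  rw [cs.length_rightInvSeq] at hk
  refine ⟨k, hk, ?_⟩
  have := cs.wordProd_mul_getD_rightInvSeq ω k
  rw [List.getD_eq_getElem _ _ (by rw [cs.length_rightInvSeq]; exact hk), hget] at this
  rw [← this, hw]

variable (J : Set B)

/-- Every element of the standard parabolic subgroup is a product of simple reflections
with indices in `J`. -/
lemma exists_Jword {p : W} (hp : p ∈ Subgroup.closure (cs.simple '' J)) :
    ∃ ω : List B, (∀ b ∈ ω, b ∈ J) ∧ π ω = p := by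
  induction hp using Subgroup.closure_induction with
  | mem x hx =>
      obtain ⟨b, hb, rfl⟩ := hx
      exact ⟨[b], by simpa using hb, by simp⟩
  | one => exact ⟨[], by simp, by simp⟩
  | mul a b _ _ ha hb =>
      obtain ⟨α, hα, rfl⟩ := ha
      obtain ⟨β, hβ, rfl⟩ := hb
      exact ⟨α ++ β, by
        intro x hx
        rcases List.mem_append.mp hx with h | h
        exacts [hα x h, hβ x h], by rw [cs.wordProd_append]⟩
  | inv a _ ha =>
      obtain ⟨α, hα, rfl⟩ := ha
      exact ⟨α.reverse, by
        intro x hx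
        exact hα x (List.mem_reverse.mp hx), by rw [cs.wordProd_reverse]⟩

/-- Deletion: a non-reduced word can be shortened by two letters, keeping the product and
using only letters of the original word. -/
lemma delete_two {ω : List B} (h : ¬ cs.IsReduced ω) :
    ∃ ω' : List B, ω'.length + 2 = ω.length ∧ π ω' = π ω ∧ ∀ b ∈ ω', b ∈ ω := by
  classical
  have hne : ω ≠ [] := by
    rintro rfl
    exact h (by simp [CoxeterSystem.IsReduced])
  have hexP : ∃ l, ¬ cs.IsReduced (ω.take (l + 1)) := by
    refine ⟨ω.length - 1, ?_⟩
    rwa [show ω.length - 1 + 1 = ω.length by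
      have := List.length_pos_iff.mpr hne; omega, List.take_length]
  set l := Nat.find hexP with hl_def
  have hl : ¬ cs.IsReduced (ω.take (l + 1)) := Nat.find_spec hexP
  have hmin : ∀ k, k < l → cs.IsReduced (ω.take (k + 1)) := by
    intro k hk
    have := Nat.find_min hexP hk
    simpa using this
  have hllen : l < ω.length := by
    have h1 : l ≤ ω.length - 1 := Nat.find_min' hexP (by
      rwa [show ω.length - 1 + 1 = ω.length by
        have := List.length_pos_iff.mpr hne; omega, List.take_length])
    have := List.length_pos_iff.mpr hne
    omega
  have hredl : cs.IsReduced (ω.take l) := by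
    rcases Nat.eq_zero_or_pos l with h0 | h0
    · rw [h0]
      simp [CoxeterSystem.IsReduced]
    · have := hmin (l - 1) (by omega)
      rwa [show l - 1 + 1 = l by omega] at this
  have htake : ω.take (l + 1) = ω.take l ++ [ω[l]] := by
    rw [List.take_succ, List.getElem?_eq_getElem hllen]; rfl
  have hlenl : (ω.take l).length = l := by
    rw [List.length_take]; omega
  have hlx : ℓ (π (ω.take l)) = l := by
    rw [hredl, hlenl]  -- IsReduced : ℓ (π ω) = ω.length
  have hdesc : ℓ (π (ω.take l) * s (ω[l])) < ℓ (π (ω.take l)) := by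
    have hprod : π (ω.take (l+1)) = π (ω.take l) * s (ω[l]) := by
      rw [htake, cs.wordProd_append]; simp
    rcases cs.length_mul_simple (π (ω.take l)) ω[l] with hup | hdown
    · exfalso
      apply hl
      show ℓ (π (ω.take (l+1))) = (ω.take (l+1)).length
      rw [hprod, hup, hlx, List.length_take]
      omega
    · omega
  obtain ⟨k, hk, hkprod⟩ := exchange cs (ω.take l) rfl hdesc
  rw [hlenl] at hk
  refine ⟨(ω.take l).eraseIdx k ++ ω.drop (l + 1), ?_, ?_, ?_⟩
  · rw [List.length_append, List.length_eraseIdx]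
    simp only [hlenl, hk, if_true]
    rw [List.length_drop]
    omega
  · rw [cs.wordProd_append, hkprod]
    have : π (ω.take l) * s (ω[l]) * π (ω.drop (l+1)) = π ω := by
      conv_rhs => rw [← List.take_append_drop (l+1) ω]
      rw [cs.wordProd_append, htake, cs.wordProd_append]
      simp [mul_assoc]
    rw [this]
  · intro b hb
    rcases List.mem_append.mp hb with h' | h'
    · exact List.mem_of_mem_take (List.mem_of_mem_eraseIdx h')
    · exact List.mem_of_mem_drop h'

lemma exists_reduced_Jword {p : W} (hp : p ∈ Subgroup.closure (cs.simple '' J)) :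
    ∃ ω : List B, (∀ b ∈ ω, b ∈ J) ∧ π ω = p ∧ cs.IsReduced ω := by
  obtain ⟨ω, hJ, hprod⟩ := exists_Jword cs J hp
  clear hp
  subst hprod
  have H : ∀ n (ω : List B), ω.length = n → (∀ b ∈ ω, b ∈ J) →
      ∃ ω₂ : List B, (∀ b ∈ ω₂, b ∈ J) ∧ π ω₂ = π ω ∧ cs.IsReduced ω₂ := by
    intro n
    induction n using Nat.strong_induction_on with
    | _ n ih =>
      intro ω hlen hJw
      by_cases hred : cs.IsReduced ω
      · exact ⟨ω, hJw, rfl, hred⟩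
      · obtain ⟨ω', hlen', hprod', hmem⟩ := delete_two cs hred
        obtain ⟨ω₂, h1, h2, h3⟩ := ih ω'.length (by omega) ω' rfl
          (fun b hb => hJw b (hmem b hb))
        exact ⟨ω₂, h1, by rw [h2, hprod'], h3⟩
  exact H ω.length ω rfl hJ

lemma descent_in_J {p : W} (hp : p ∈ Subgroup.closure (cs.simple '' J)) (hp1 : p ≠ 1) :
    ∃ i ∈ J, ℓ (p * s i) < ℓ p := by
  obtain ⟨ω, hJ, hprod, hred⟩ := exists_reduced_Jword cs J hp
  have hne : ω ≠ [] := by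
    rintro rfl
    exact hp1 (by rw [← hprod]; simp)
  refine ⟨ω.getLast hne, hJ _ (List.getLast_mem hne), ?_⟩
  have hsplit : ω.dropLast ++ [ω.getLast hne] = ω := List.dropLast_append_getLast hne
  have hw : π ω.dropLast * s (ω.getLast hne) = π ω := by
    have := congrArg cs.wordProd hsplit
    rwa [cs.wordProd_append, cs.wordProd_singleton] at this
  have hps : p * s (ω.getLast hne) = π ω.dropLast := by
    rw [← hprod, ← hw]
    simp
  rw [hps, ← hprod, hred]
  calc ℓ (π ω.dropLast) ≤ ω.dropLast.length := cs.length_wordProd_le _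
    _ < ω.length := by
        rw [List.length_dropLast]
        have := List.length_pos_iff.mpr hne
        omega

/-- Key additivity: if `u` has minimal length in its coset `u W_J`, then lengths add. -/
lemma length_coset_add {u : W}
    (hu : ∀ v : W, u⁻¹ * v ∈ Subgroup.closure (cs.simple '' J) → ℓ u ≤ ℓ v)
    {p : W} (hp : p ∈ Subgroup.closure (cs.simple '' J)) :
    ℓ (u * p) = ℓ u + ℓ p := by
  have H : ∀ n (p : W), p ∈ Subgroup.closure (cs.simple '' J) → ℓ p = n →
      ℓ (u * p) = ℓ u + ℓ p := by
    intro n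
    induction n using Nat.strong_induction_on with
    | _ n ihn =>
    intro p hp hn
    have ih : ∀ m, m < n → ∀ q, q ∈ Subgroup.closure (cs.simple '' J) → ℓ q = m →
        ℓ (u * q) = ℓ u + ℓ q := fun m hm q hq hq' => ihn m hm q hq hq'
    by_cases hp1 : p = 1
    · subst hp1; simp
    · obtain ⟨i, hiJ, hdesc⟩ := descent_in_J cs J hp hp1
      have hsiK : s i ∈ Subgroup.closure (cs.simple '' J) :=
        Subgroup.subset_closure ⟨i, hiJ, rfl⟩
      set p' := p * s i with hp'def
      have hp'K : p' ∈ Subgroup.closure (cs.simple '' J) := Subgroup.mul_mem _ hp hsiK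
      have hlp' : ℓ p' + 1 = ℓ p := by
        rcases cs.length_mul_simple p i with h' | h'
        · rw [← hp'def] at h'; omega
        · rw [← hp'def] at h'; omega
      have hIH : ℓ (u * p') = ℓ u + ℓ p' := ih (ℓ p') (by omega) p' hp'K rfl
      have hpp' : p = p' * s i := by rw [hp'def]; simp
      have hup : u * p = (u * p') * s i := by rw [hp'def]; simp [mul_assoc]
      -- rule out a descent at the end
      have hnotdesc : ¬ ℓ ((u * p') * s i) < ℓ (u * p') := by
        intro hbad
        obtain ⟨μ, hμred, hμ⟩ := cs.exists_reduced_word' u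
        obtain ⟨ν, hνJ, hνprod, hνred⟩ := exists_reduced_Jword cs J hp'K
        have hμν : π (μ ++ ν) = u * p' := by rw [cs.wordProd_append, ← hμ, hνprod]
        obtain ⟨k, hk, hkprod⟩ := exchange cs (μ ++ ν) hμν hbad
        rw [List.length_append] at hk
        by_cases hkμ : k < μ.length
        · rw [List.eraseIdx_append_of_lt_length hkμ] at hkprod
          rw [cs.wordProd_append] at hkprod
          -- u * p' * s i = π (μ.eraseIdx k) * p'
          have hueq : π (μ.eraseIdx k) = u * p' * s i * p'⁻¹ := by
            rw [← hkprod, hνprod]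
            group
          have hmemK : u⁻¹ * π (μ.eraseIdx k) ∈ Subgroup.closure (cs.simple '' J) := by
            rw [hueq]
            have : u⁻¹ * (u * p' * s i * p'⁻¹) = p' * s i * p'⁻¹ := by group
            rw [this]
            exact Subgroup.mul_mem _ (Subgroup.mul_mem _ hp'K hsiK) (Subgroup.inv_mem _ hp'K)
          have h1 : ℓ u ≤ ℓ (π (μ.eraseIdx k)) := hu _ hmemK
          have h2 : ℓ (π (μ.eraseIdx k)) ≤ (μ.eraseIdx k).length := cs.length_wordProd_le _
          have h3 : (μ.eraseIdx k).length = μ.length - 1 := by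
            rw [List.length_eraseIdx]; simp [hkμ]
          have h4 : ℓ u = μ.length := by rw [hμ, hμred]
          omega
        · push_neg at hkμ
          rw [List.eraseIdx_append_of_length_le hkμ] at hkprod
          rw [cs.wordProd_append] at hkprod
          -- u * p' * s i = u * π (ν.eraseIdx (k - μ.length)),  so p = π (ν.eraseIdx _)
          have hpeq : π (ν.eraseIdx (k - μ.length)) = p := by
            have : u * π (ν.eraseIdx (k - μ.length)) = u * p' * s i := by
              rw [← hkprod, hμ]
            rw [mul_assoc] at this
            have h5 := mul_left_cancel this
            rw [h5, ← hpp']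
          have h6 : ℓ p ≤ (ν.eraseIdx (k - μ.length)).length := by
            rw [← hpeq]
            exact cs.length_wordProd_le _
          have h7 : (ν.eraseIdx (k - μ.length)).length ≤ ν.length - 1 := by
            rw [List.length_eraseIdx]
            split <;> omega
          have h8 : ν.length = ℓ p' := by rw [← hνred, hνprod]
          omega
      rcases cs.length_mul_simple (u * p') i with h' | h'
      · rw [hup, h', hIH]; omega
      · exfalso; exact hnotdesc (by omega)
  exact H (ℓ p) p hp rfl

/-- Uniqueness of the minimal length coset representative. -/
lemma minimal_coset_unique {u v : W}
    (hu : ∀ v' : W, u⁻¹ * v' ∈ Subgroup.closure (cs.simple '' J) → ℓ u ≤ ℓ v')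
    (hv : u⁻¹ * v ∈ Subgroup.closure (cs.simple '' J)) (hl : ℓ v ≤ ℓ u) : v = u := by
  have hveq : v = u * (u⁻¹ * v) := by group
  have hadd : ℓ (u * (u⁻¹ * v)) = ℓ u + ℓ (u⁻¹ * v) := length_coset_add cs J hu hv
  rw [← hveq] at hadd
  have h0 : ℓ (u⁻¹ * v) = 0 := by omega
  have := cs.length_eq_zero_iff.mp h0
  calc v = u * (u⁻¹ * v) := hveq
    _ = u * 1 := by rw [this]
    _ = u := by simp

variable (σ : W ≃* W) (perm : Equiv.Perm B)

lemma sigma_wordProd (hπ : ∀ i : B, σ (cs.simple i) = cs.simple (perm i)) (ω : List B) :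
    σ (π ω) = π (ω.map perm) := by
  induction ω with
  | nil => simp
  | cons i ω ih => rw [cs.wordProd_cons, map_mul, hπ, ih, List.map_cons, cs.wordProd_cons]

lemma sigma_length_le (hπ : ∀ i : B, σ (cs.simple i) = cs.simple (perm i)) (v : W) :
    ℓ (σ v) ≤ ℓ v := by
  obtain ⟨ω, hred, hv⟩ := cs.exists_reduced_word' v
  subst hv
  rw [sigma_wordProd cs σ perm hπ]
  calc ℓ (π (ω.map perm)) ≤ (ω.map perm).length := cs.length_wordProd_le _
    _ = ω.length := List.length_map _
    _ = ℓ (π ω) := hred.symm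

lemma sigma_symm_simple (hπ : ∀ i : B, σ (cs.simple i) = cs.simple (perm i)) (b : B) :
    σ.symm (cs.simple b) = cs.simple (perm.symm b) := by
  have := hπ (perm.symm b)
  rw [Equiv.apply_symm_apply] at this
  rw [← this, MulEquiv.symm_apply_apply]

lemma sigma_length (hπ : ∀ i : B, σ (cs.simple i) = cs.simple (perm i)) (v : W) :
    ℓ (σ v) = ℓ v := by
  refine le_antisymm (sigma_length_le cs σ perm hπ v) ?_
  have h2 := sigma_length_le cs σ.symm perm.symm (sigma_symm_simple cs σ perm hπ) (σ v)
  rwa [MulEquiv.symm_apply_apply] at h2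

lemma sigma_closure_mem (hπ : ∀ i : B, σ (cs.simple i) = cs.simple (perm i))
    (hπJ : ∀ i ∈ J, perm i ∈ J) {k : W} (hk : k ∈ Subgroup.closure (cs.simple '' J)) :
    σ k ∈ Subgroup.closure (cs.simple '' J) := by
  induction hk using Subgroup.closure_induction with
  | mem x hx =>
      obtain ⟨b, hb, rfl⟩ := hx
      rw [hπ]
      exact Subgroup.subset_closure ⟨perm b, hπJ b hb, rfl⟩
  | one => simpa using Subgroup.one_mem _
  | mul a b _ _ ha hb => rw [map_mul]; exact Subgroup.mul_mem _ ha hb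
  | inv a _ ha => rw [map_inv]; exact Subgroup.inv_mem _ ha

end SigmaFixedAux

/-- Let `(W,S)` be a Coxeter system with `S` finite, `W_J` a standard
parabolic subgroup, and `σ` an automorphism of `W` permuting the simple reflections and
stabilizing `J`. Then the natural map `W^σ/(W_J)^σ → (W/W_J)^σ` is a bijection: every
`σ`-stable coset `wW_J` contains a `σ`-fixed element — in fact one of minimal length —
and two `σ`-fixed elements of the same coset differ by a `σ`-fixed element of `W_J`. -/
theorem sigma_fixed_cosets (B : Type*) [Finite B] (W : Type*) [Group W]
    (M : CoxeterMatrix B) (cs : CoxeterSystem M W)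
    (J : Set B) (σ : W ≃* W) (π : Equiv.Perm B)
    (hπ : ∀ i : B, σ (cs.simple i) = cs.simple (π i))
    (hπJ : ∀ i ∈ J, π i ∈ J) :
    (∀ w : W, w⁻¹ * σ w ∈ Subgroup.closure (cs.simple '' J) →
      ∃ w₀ : W, w⁻¹ * w₀ ∈ Subgroup.closure (cs.simple '' J) ∧ σ w₀ = w₀ ∧
        ∀ v : W, w⁻¹ * v ∈ Subgroup.closure (cs.simple '' J) → cs.length w₀ ≤ cs.length v) ∧
      (∀ w w' : W, σ w = w → σ w' = w' →
        w⁻¹ * w' ∈ Subgroup.closure (cs.simple '' J) →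
        ∃ u : W, σ u = u ∧ u ∈ Subgroup.closure (cs.simple '' J) ∧ w' = w * u) := by
  classical
  constructor
  · intro w hw
    -- find a minimal length element of the coset
    have hPex : ∃ n, ∃ v : W, w⁻¹ * v ∈ Subgroup.closure (cs.simple '' J) ∧ cs.length v = n :=
      ⟨cs.length w, w, by simp [Subgroup.one_mem], rfl⟩
    obtain ⟨w₀, hw₀K, hw₀len⟩ := Nat.find_spec hPex
    have hmin : ∀ v : W, w⁻¹ * v ∈ Subgroup.closure (cs.simple '' J) →
        cs.length w₀ ≤ cs.length v := by
      intro v hv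
      rw [hw₀len]
      exact Nat.find_min' hPex ⟨v, hv, rfl⟩
    have hmin' : ∀ v : W, w₀⁻¹ * v ∈ Subgroup.closure (cs.simple '' J) →
        cs.length w₀ ≤ cs.length v := by
      intro v hv
      apply hmin
      have : w⁻¹ * v = (w⁻¹ * w₀) * (w₀⁻¹ * v) := by group
      rw [this]
      exact Subgroup.mul_mem _ hw₀K hv
    -- σ w₀ lies in the same coset
    have hσw₀ : w⁻¹ * σ w₀ ∈ Subgroup.closure (cs.simple '' J) := by
      have h1 : σ (w⁻¹ * w₀) ∈ Subgroup.closure (cs.simple '' J) :=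
        SigmaFixedAux.sigma_closure_mem cs J σ π hπ hπJ hw₀K
      have h2 : w⁻¹ * σ w₀ = (w⁻¹ * σ w) * σ (w⁻¹ * w₀) := by
        rw [map_mul, map_inv]
        group
      rw [h2]
      exact Subgroup.mul_mem _ hw h1
    have hcos : w₀⁻¹ * σ w₀ ∈ Subgroup.closure (cs.simple '' J) := by
      have : w₀⁻¹ * σ w₀ = (w⁻¹ * w₀)⁻¹ * (w⁻¹ * σ w₀) := by group
      rw [this]
      exact Subgroup.mul_mem _ (Subgroup.inv_mem _ hw₀K) hσw₀
    have hfix : σ w₀ = w₀ := by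
      apply SigmaFixedAux.minimal_coset_unique cs J hmin' hcos
      rw [SigmaFixedAux.sigma_length cs σ π hπ w₀]
    exact ⟨w₀, hw₀K, hfix, hmin⟩
  · intro w w' hw hw' hmem
    refine ⟨w⁻¹ * w', ?_, hmem, by group⟩
    rw [map_mul, map_inv, hw, hw']
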